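/- The function f(Q, R) = λ₁(R^{-1/2} Q Q^H R^{-1/2}), the largest eigenvalue of R^{-1/2} Q Q^H R^{-1/2}, is jointly convex in (Q, R) on ℂ^{N×M} × (Hermitian positive definite N×N matrices). -/

import Mathlib

open Matrix Complex
open scoped ComplexOrder

/-- The largest real eigenvalue of a complex matrix (as `sSup` of its set of real
eigenvalues); for a Hermitian matrix this is the largest eigenvalue. -/
noncomputable def lambdaMax {N : ℕ} (A : Matrix (Fin N) (Fin N) ℂ) : ℝ :=
  sSup {t : ℝ | ∃ v : Fin N → ℂ, v ≠ 0 ∧ A.mulVec v = (t : ℂ) • v}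

open Classical in
/-- The inverse of the positive definite square root of a positive definite matrix
(junk value `0` if the matrix is not positive definite). -/
noncomputable def isqrt {N : ℕ} (R : Matrix (Fin N) (Fin N) ℂ) : Matrix (Fin N) (Fin N) ℂ :=
  if h : R.PosDef then
    (h.posSemidef.1.eigenvectorUnitary.1 *
      diagonal ((↑) ∘ (Real.sqrt ∘ h.posSemidef.1.eigenvalues)) *
      (star h.posSemidef.1.eigenvectorUnitary : Matrix (Fin N) (Fin N) ℂ))⁻¹ else 0

/-- Euclidean norm of a complex vector. -/
noncomputable def vecNorm {N : ℕ} (v : Fin N → ℂ) : ℝ :=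
  Real.sqrt (∑ i, Complex.normSq (v i))

/-- Frobenius norm of a complex matrix. -/
noncomputable def frobNorm {N M : ℕ} (X : Matrix (Fin N) (Fin M) ℂ) : ℝ :=
  Real.sqrt (∑ i, ∑ j, Complex.normSq (X i j))

variable {N M : ℕ}

noncomputable def psqrt {R : Matrix (Fin N) (Fin N) ℂ} (h : R.PosDef) : Matrix (Fin N) (Fin N) ℂ :=
  h.posSemidef.1.eigenvectorUnitary.1 *
    diagonal ((↑) ∘ (Real.sqrt ∘ h.posSemidef.1.eigenvalues)) *
    (star h.posSemidef.1.eigenvectorUnitary : Matrix (Fin N) (Fin N) ℂ)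

lemma psqrt_mul_self {R : Matrix (Fin N) (Fin N) ℂ} (hR : R.PosDef) : psqrt hR * psqrt hR = R := by
  unfold psqrt
  have hnn := hR.posSemidef.eigenvalues_nonneg
  set hH := hR.posSemidef.1 with hHdef
  have hU : (star hH.eigenvectorUnitary : Matrix (Fin N) (Fin N) ℂ) * hH.eigenvectorUnitary.1 = 1 :=
    Unitary.coe_star_mul_self _
  have hD : diagonal (((↑) : ℝ → ℂ) ∘ (Real.sqrt ∘ hH.eigenvalues)) *
      diagonal (((↑) : ℝ → ℂ) ∘ (Real.sqrt ∘ hH.eigenvalues)) = diagonal (RCLike.ofReal ∘ hH.eigenvalues) := by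
    rw [diagonal_mul_diagonal]
    congr 1
    ext i
    simp only [Function.comp_apply]
    rw [← Complex.ofReal_mul, Real.mul_self_sqrt (hnn i)]
    rfl
  conv_rhs => rw [hH.spectral_theorem, Unitary.conjStarAlgAut_apply]
  rw [← hD]
  calc _ = hH.eigenvectorUnitary.1 * diagonal (((↑) : ℝ → ℂ) ∘ (Real.sqrt ∘ hH.eigenvalues)) *
      ((star hH.eigenvectorUnitary : Matrix (Fin N) (Fin N) ℂ) * hH.eigenvectorUnitary.1) *
      diagonal (((↑) : ℝ → ℂ) ∘ (Real.sqrt ∘ hH.eigenvalues)) *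
      (star hH.eigenvectorUnitary : Matrix (Fin N) (Fin N) ℂ) := by simp only [mul_assoc]
    _ = _ := by rw [hU, mul_one]; simp only [mul_assoc]

lemma psqrt_herm {R : Matrix (Fin N) (Fin N) ℂ} (hR : R.PosDef) : (psqrt hR).IsHermitian := by
  unfold psqrt Matrix.IsHermitian
  have hd : (diagonal (((↑) : ℝ → ℂ) ∘ (Real.sqrt ∘ hR.posSemidef.1.eigenvalues)))ᴴ =
      diagonal (((↑) : ℝ → ℂ) ∘ (Real.sqrt ∘ hR.posSemidef.1.eigenvalues)) := by
    rw [diagonal_conjTranspose]; congr 1; funext i; simp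
  rw [conjTranspose_mul, conjTranspose_mul, hd]
  simp only [← star_eq_conjTranspose, Unitary.coe_star, star_star, mul_assoc]

lemma herm_dot_repr {A : Matrix (Fin N) (Fin N) ℂ} (hA : A.IsHermitian) (x : Fin N → ℂ) :
    star x ⬝ᵥ A *ᵥ x = ∑ i, (hA.eigenvalues i : ℂ) *
      Complex.normSq (inner (𝕜 := ℂ) (hA.eigenvectorBasis i) (WithLp.toLp 2 x : EuclideanSpace ℂ (Fin N))) := by
  set b := hA.eigenvectorBasis with hb
  set y : EuclideanSpace ℂ (Fin N) := WithLp.toLp 2 x with hy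
  set c : Fin N → ℂ := fun i => inner (𝕜 := ℂ) (b i) y with hc
  have hx : x = ∑ i, c i • ⇑(b i) := by
    have := b.sum_repr' y
    have h := congrArg (fun (v : EuclideanSpace ℂ (Fin N)) => v.ofLp) this.symm
    simpa [WithLp.ofLp_sum] using h
  have h1 : A *ᵥ x = ∑ i, ((hA.eigenvalues i : ℂ) * c i) • ⇑(b i) := by
    conv_lhs => rw [hx]
    rw [← A.mulVecLin_apply, map_sum]
    refine Finset.sum_congr rfl fun i _ => ?_
    rw [_root_.map_smul, A.mulVecLin_apply, hA.mulVec_eigenvectorBasis]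
    ext j
    simp [← hb, Complex.real_smul, mul_comm, mul_assoc, mul_left_comm]
  rw [h1]
  have h2 : star x ⬝ᵥ (∑ i, ((hA.eigenvalues i : ℂ) * c i) • ⇑(b i))
      = ∑ i, ((hA.eigenvalues i : ℂ) * c i) * inner (𝕜 := ℂ) y (b i) := by
    rw [dotProduct_sum]
    refine Finset.sum_congr rfl fun i _ => ?_
    rw [dotProduct_smul, smul_eq_mul, EuclideanSpace.inner_eq_star_dotProduct, dotProduct_comm]
  rw [h2]
  refine Finset.sum_congr rfl fun i _ => ?_
  have : inner (𝕜 := ℂ) y (b i) = starRingEnd ℂ (c i) := by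
    rw [hc, ← inner_conj_symm]
  rw [this, mul_assoc, mul_comm (c i), ← Complex.normSq_eq_conj_mul_self]

lemma parseval {A : Matrix (Fin N) (Fin N) ℂ} (hA : A.IsHermitian) (x : Fin N → ℂ) :
    star x ⬝ᵥ x = ((∑ i, Complex.normSq
      (inner (𝕜 := ℂ) (hA.eigenvectorBasis i) (WithLp.toLp 2 x : EuclideanSpace ℂ (Fin N))) : ℝ) : ℂ) := by
  set b := hA.eigenvectorBasis with hb
  set y : EuclideanSpace ℂ (Fin N) := WithLp.toLp 2 x with hy
  have h0 : star x ⬝ᵥ x = inner (𝕜 := ℂ) y y := by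
    rw [EuclideanSpace.inner_eq_star_dotProduct, dotProduct_comm]
  rw [h0, ← b.sum_inner_mul_inner y y]
  push_cast
  refine Finset.sum_congr rfl fun i _ => ?_
  rw [← inner_conj_symm y (b i), ← Complex.normSq_eq_conj_mul_self]

lemma star_dot_self_eq (v : Fin N → ℂ) :
    star v ⬝ᵥ v = ((∑ i, Complex.normSq (v i) : ℝ) : ℂ) := by
  push_cast
  simp [dotProduct, Complex.normSq_eq_conj_mul_self]

lemma star_dot_self_re_pos {v : Fin N → ℂ} (hv : v ≠ 0) :
    0 < (star v ⬝ᵥ v).re := by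
  rw [star_dot_self_eq, Complex.ofReal_re]
  obtain ⟨i, hi⟩ : ∃ i, v i ≠ 0 := Function.ne_iff.mp hv
  exact Finset.sum_pos' (fun j _ => Complex.normSq_nonneg _)
    ⟨i, Finset.mem_univ i, Complex.normSq_pos.mpr hi⟩

lemma mem_imp_le {A : Matrix (Fin N) (Fin N) ℂ} (hA : A.IsHermitian)
    (hne : Nonempty (Fin N)) {t : ℝ}
    (ht : t ∈ {t : ℝ | ∃ v : Fin N → ℂ, v ≠ 0 ∧ A.mulVec v = (t : ℂ) • v}) :
    t ≤ Finset.univ.sup' Finset.univ_nonempty hA.eigenvalues := by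
  obtain ⟨v, hv, he⟩ := ht
  set nc : Fin N → ℝ := fun i => Complex.normSq
    (inner (𝕜 := ℂ) (hA.eigenvectorBasis i) (WithLp.toLp 2 v : EuclideanSpace ℂ (Fin N))) with hnc
  set n : ℝ := ∑ i, Complex.normSq (v i) with hn
  have hn2' : n = ∑ i, nc i := by
    have := parseval hA v
    rw [star_dot_self_eq v] at this
    exact_mod_cast this
  have h1' : t * n = ∑ i, hA.eigenvalues i * nc i := by
    have hc1 := herm_dot_repr hA v
    rw [he, dotProduct_smul, star_dot_self_eq v, smul_eq_mul, ← Complex.ofReal_mul] at hc1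
    have : ((t * n : ℝ) : ℂ) = ((∑ i, hA.eigenvalues i * nc i : ℝ) : ℂ) := by
      rw [hc1]; push_cast; rfl
    exact_mod_cast this
  have hnpos : 0 < n := by
    have := star_dot_self_re_pos hv
    rwa [star_dot_self_eq, Complex.ofReal_re] at this
  set Mx := Finset.univ.sup' Finset.univ_nonempty hA.eigenvalues with hMx
  have h2 : ∑ i, hA.eigenvalues i * nc i ≤ Mx * n := by
    rw [hn2', Finset.mul_sum]
    refine Finset.sum_le_sum fun i _ => ?_
    exact mul_le_mul_of_nonneg_right (Finset.le_sup' _ (Finset.mem_univ i))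
      (Complex.normSq_nonneg _)
  have := h1'.le.trans h2
  exact le_of_mul_le_mul_right this hnpos

lemma bddAbove_eigs {A : Matrix (Fin N) (Fin N) ℂ} (hA : A.IsHermitian) :
    BddAbove {t : ℝ | ∃ v : Fin N → ℂ, v ≠ 0 ∧ A.mulVec v = (t : ℂ) • v} := by
  rcases isEmpty_or_nonempty (Fin N) with h | h
  · exact ⟨0, by rintro t ⟨v, hv, -⟩; exact absurd (Subsingleton.elim v 0) hv⟩
  · exact ⟨_, fun t ht => mem_imp_le hA h ht⟩

lemma eig_le_lambdaMax {A : Matrix (Fin N) (Fin N) ℂ} (hA : A.IsHermitian) (i : Fin N) :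
    hA.eigenvalues i ≤ lambdaMax A := by
  refine le_csSup (bddAbove_eigs hA) ?_
  refine ⟨⇑(hA.eigenvectorBasis i), by simpa using hA.eigenvectorBasis.orthonormal.ne_zero i, ?_⟩
  rw [hA.mulVec_eigenvectorBasis]
  ext j
  simp [Complex.real_smul]

lemma rayleigh_le {A : Matrix (Fin N) (Fin N) ℂ} (hA : A.IsHermitian) (x : Fin N → ℂ) :
    (star x ⬝ᵥ A *ᵥ x).re ≤ lambdaMax A * (star x ⬝ᵥ x).re := by
  set nc : Fin N → ℝ := fun i => Complex.normSq
    (inner (𝕜 := ℂ) (hA.eigenvectorBasis i) (WithLp.toLp 2 x : EuclideanSpace ℂ (Fin N))) with hnc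
  have h1 : (star x ⬝ᵥ A *ᵥ x).re = ∑ i, hA.eigenvalues i * nc i := by
    rw [herm_dot_repr hA x]
    have : (∑ i, (hA.eigenvalues i : ℂ) * (nc i : ℂ)) = ((∑ i, hA.eigenvalues i * nc i : ℝ) : ℂ) := by
      push_cast; rfl
    rw [this, Complex.ofReal_re]
  have h2 : (star x ⬝ᵥ x).re = ∑ i, nc i := by
    rw [parseval hA x, Complex.ofReal_re]
  rw [h1, h2, Finset.mul_sum]
  refine Finset.sum_le_sum fun i _ => ?_
  exact mul_le_mul_of_nonneg_right (eig_le_lambdaMax hA i) (Complex.normSq_nonneg _)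

lemma lambdaMax_nonneg {A : Matrix (Fin N) (Fin N) ℂ} (hA : A.PosSemidef) :
    0 ≤ lambdaMax A := by
  rcases isEmpty_or_nonempty (Fin N) with h | h
  · have : {t : ℝ | ∃ v : Fin N → ℂ, v ≠ 0 ∧ A.mulVec v = (t : ℂ) • v} = ∅ := by
      ext t
      simp only [Set.mem_setOf_eq, Set.mem_empty_iff_false, iff_false, not_exists]
      intro v ⟨hv, _⟩
      exact hv (Subsingleton.elim v 0)
    rw [lambdaMax, this, Real.sSup_empty]
  · exact (hA.eigenvalues_nonneg (Classical.arbitrary (Fin N))).trans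
      (eig_le_lambdaMax hA.1 _)

lemma lambdaMax_le {A : Matrix (Fin N) (Fin N) ℂ} {c : ℝ} (hc : 0 ≤ c)
    (h : ∀ (t : ℝ) (v : Fin N → ℂ), v ≠ 0 → A.mulVec v = (t : ℂ) • v → t ≤ c) :
    lambdaMax A ≤ c := by
  refine Real.sSup_le ?_ hc
  rintro t ⟨v, hv, he⟩
  exact h t v hv he
lemma sqrt_det_ne {R : Matrix (Fin N) (Fin N) ℂ} (hR : R.PosDef) :
    (psqrt hR).det ≠ 0 := by
  have hd : (psqrt hR).det * (psqrt hR).det = R.det := by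
    rw [← det_mul, psqrt_mul_self hR]
  intro h0
  rw [h0, mul_zero] at hd
  exact hR.det_pos.ne' hd.symm

lemma isqrt_mul {R : Matrix (Fin N) (Fin N) ℂ} (hR : R.PosDef) :
    isqrt R * psqrt hR = 1 := by
  rw [isqrt, dif_pos hR]
  exact nonsing_inv_mul _ (sqrt_det_ne hR).isUnit

lemma mul_isqrt {R : Matrix (Fin N) (Fin N) ℂ} (hR : R.PosDef) :
    psqrt hR * isqrt R = 1 := by
  rw [isqrt, dif_pos hR]
  exact mul_nonsing_inv _ (sqrt_det_ne hR).isUnit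

lemma isqrt_herm {R : Matrix (Fin N) (Fin N) ℂ} (hR : R.PosDef) :
    (isqrt R)ᴴ = isqrt R := by
  rw [isqrt, dif_pos hR]
  exact (psqrt_herm hR).inv

lemma conj_dot {S : Matrix (Fin N) (Fin N) ℂ} (hS : Sᴴ = S)
    (B : Matrix (Fin N) (Fin N) ℂ) (x : Fin N → ℂ) :
    star (S *ᵥ x) ⬝ᵥ (B *ᵥ (S *ᵥ x)) = star x ⬝ᵥ ((S * B * S) *ᵥ x) :=
  calc star (S *ᵥ x) ⬝ᵥ (B *ᵥ (S *ᵥ x))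
      = (star x ᵥ* S) ⬝ᵥ ((B * S) *ᵥ x) := by rw [star_mulVec, hS, mulVec_mulVec]
    _ = star x ⬝ᵥ (S *ᵥ ((B * S) *ᵥ x)) := (dotProduct_mulVec _ _ _).symm
    _ = star x ⬝ᵥ ((S * B * S) *ᵥ x) := by rw [mulVec_mulVec, mul_assoc]

lemma qq_dot (Q : Matrix (Fin N) (Fin M) ℂ) (x : Fin N → ℂ) :
    star x ⬝ᵥ ((Q * Qᴴ) *ᵥ x) = star (Qᴴ *ᵥ x) ⬝ᵥ (Qᴴ *ᵥ x) := by
  rw [star_mulVec, conjTranspose_conjTranspose, ← mulVec_mulVec, dotProduct_mulVec]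

lemma amgm {p q f g a b α : ℝ} (hp : 0 ≤ p) (hq : 0 ≤ q) (hf : 0 ≤ f) (hg : 0 ≤ g)
    (ha : 0 ≤ a) (hb : 0 ≤ b) (h1 : p ^ 2 ≤ f * a) (h2 : q ^ 2 ≤ g * b)
    (hα0 : 0 ≤ α) (hα1 : α ≤ 1) :
    (α * p + (1 - α) * q) ^ 2 ≤ (α * f + (1 - α) * g) * (α * a + (1 - α) * b) := by
  have hfb : 0 ≤ f * b := mul_nonneg hf hb
  have hga : 0 ≤ g * a := mul_nonneg hg ha
  have hsq : (2 * (p * q)) ^ 2 ≤ (f * b + g * a) ^ 2 := by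
    nlinarith [sq_nonneg (f * b - g * a), mul_le_mul h1 h2 (sq_nonneg q) (mul_nonneg hf ha),
      mul_nonneg hp hq]
  have key : 2 * (p * q) ≤ f * b + g * a :=
    le_of_pow_le_pow_left₀ two_ne_zero (by linarith) hsq
  nlinarith [mul_nonneg hα0 (sub_nonneg.mpr hα1), sq_nonneg α, sq_nonneg (1 - α),
    mul_le_mul_of_nonneg_left key (mul_nonneg hα0 (sub_nonneg.mpr hα1)),
    mul_le_mul_of_nonneg_left h1 (sq_nonneg α), mul_le_mul_of_nonneg_left h2 (sq_nonneg (1 - α))]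

lemma posdef_comb {R₁ R₂ : Matrix (Fin N) (Fin N) ℂ} (hR₁ : R₁.PosDef) (hR₂ : R₂.PosDef)
    {α : ℝ} (hα0 : 0 ≤ α) (hα1 : α ≤ 1) : (α • R₁ + (1 - α) • R₂).PosDef := by
  constructor
  · simp [Matrix.IsHermitian, conjTranspose_add, conjTranspose_smul, hR₁.1.eq, hR₂.1.eq]
  · intro x hx
    rcases eq_or_lt_of_le hα0 with h | h
    · rw [← h]; simpa using hR₂.2 hx
    · exact ((hR₁.smul h).add_posSemidef (hR₂.posSemidef.smul (by linarith : (0:ℝ) ≤ 1 - α))).2 hx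
lemma nsq_eq_norm_sq (u : EuclideanSpace ℂ (Fin M)) :
    (∑ j, Complex.normSq (u j)) = ‖u‖ ^ 2 := by
  rw [EuclideanSpace.norm_eq, Real.sq_sqrt (by positivity)]
  exact Finset.sum_congr rfl fun j _ => by
    simp [Complex.normSq_eq_norm_sq]

lemma psd_conj {R : Matrix (Fin N) (Fin N) ℂ} (hR : R.PosDef)
    (Q : Matrix (Fin N) (Fin M) ℂ) : (isqrt R * (Q * Qᴴ) * isqrt R).PosSemidef := by
  have h := (posSemidef_self_mul_conjTranspose Q).conjTranspose_mul_mul_same (isqrt R)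
  rwa [isqrt_herm hR] at h

lemma rayleigh_transfer {R : Matrix (Fin N) (Fin N) ℂ} (hR : R.PosDef)
    (Q : Matrix (Fin N) (Fin M) ℂ) (x : Fin N → ℂ) :
    (star x ⬝ᵥ ((Q * Qᴴ) *ᵥ x)).re
      ≤ lambdaMax (isqrt R * (Q * Qᴴ) * isqrt R) * (star x ⬝ᵥ (R *ᵥ x)).re := by
  set sq := psqrt hR with hsqdef
  have hsq : sqᴴ = sq := psqrt_herm hR
  have h := rayleigh_le (psd_conj hR Q).1 (sq *ᵥ x)
  have e1 : star (sq *ᵥ x) ⬝ᵥ ((isqrt R * (Q * Qᴴ) * isqrt R) *ᵥ (sq *ᵥ x))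
      = star x ⬝ᵥ ((Q * Qᴴ) *ᵥ x) := by
    rw [conj_dot hsq]
    have key : sq * (isqrt R * (Q * Qᴴ) * isqrt R) * sq = Q * Qᴴ := by
      have h3 : sq * (isqrt R * (Q * Qᴴ) * isqrt R) * sq
          = (sq * isqrt R) * (Q * Qᴴ) * (isqrt R * sq) := by noncomm_ring
      rw [h3, mul_isqrt hR, isqrt_mul hR, one_mul, mul_one]
    rw [key]
  have e2 : star (sq *ᵥ x) ⬝ᵥ (sq *ᵥ x) = star x ⬝ᵥ (R *ᵥ x) := by
    have h2 := conj_dot hsq 1 x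
    rw [one_mulVec] at h2
    rw [h2, mul_one, psqrt_mul_self hR]
  rwa [e1, e2] at h


/-- `f(Q,R) = λ₁(R^{-1/2} Q Qᴴ R^{-1/2})` is jointly convex in `(Q,R)` on
`ℂ^{N×M} ×` (Hermitian positive definite matrices). -/
theorem lambdaMax_jointly_convex {N M : ℕ}
    (Q₁ Q₂ : Matrix (Fin N) (Fin M) ℂ) (R₁ R₂ : Matrix (Fin N) (Fin N) ℂ)
    (hR₁ : R₁.PosDef) (hR₂ : R₂.PosDef)
    (α : ℝ) (hα0 : 0 ≤ α) (hα1 : α ≤ 1) :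
    lambdaMax (isqrt (α • R₁ + (1 - α) • R₂) *
        ((α • Q₁ + (1 - α) • Q₂) * (α • Q₁ + (1 - α) • Q₂)ᴴ) *
        isqrt (α • R₁ + (1 - α) • R₂))
      ≤ α * lambdaMax (isqrt R₁ * (Q₁ * Q₁ᴴ) * isqrt R₁)
        + (1 - α) * lambdaMax (isqrt R₂ * (Q₂ * Q₂ᴴ) * isqrt R₂) := by
  have hRα : (α • R₁ + (1 - α) • R₂).PosDef := posdef_comb hR₁ hR₂ hα0 hα1
  set Qα := α • Q₁ + (1 - α) • Q₂ with hQαdef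
  set Rα := α • R₁ + (1 - α) • R₂ with hRαdef
  set f₁ := lambdaMax (isqrt R₁ * (Q₁ * Q₁ᴴ) * isqrt R₁) with hf₁
  set f₂ := lambdaMax (isqrt R₂ * (Q₂ * Q₂ᴴ) * isqrt R₂) with hf₂
  have hf₁0 : 0 ≤ f₁ := lambdaMax_nonneg (psd_conj hR₁ Q₁)
  have hf₂0 : 0 ≤ f₂ := lambdaMax_nonneg (psd_conj hR₂ Q₂)
  have hc : 0 ≤ α * f₁ + (1 - α) * f₂ :=
    add_nonneg (mul_nonneg hα0 hf₁0) (mul_nonneg (by linarith) hf₂0)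
  refine lambdaMax_le hc ?_
  intro t v hv he
  set sq := psqrt hRα with hsqdef
  have hsq : sqᴴ = sq := psqrt_herm hRα
  set x := isqrt Rα *ᵥ v with hxdef
  have hvx : v = sq *ᵥ x := by
    rw [hxdef, mulVec_mulVec, mul_isqrt hRα, one_mulVec]
  have hn : 0 < (star v ⬝ᵥ v).re := star_dot_self_re_pos hv
  have e1 : star v ⬝ᵥ ((isqrt Rα * (Qα * Qαᴴ) * isqrt Rα) *ᵥ v) = (t : ℂ) * (star v ⬝ᵥ v) := by
    rw [he, dotProduct_smul, smul_eq_mul]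
  have e2 : star v ⬝ᵥ ((isqrt Rα * (Qα * Qαᴴ) * isqrt Rα) *ᵥ v)
      = star x ⬝ᵥ ((Qα * Qαᴴ) *ᵥ x) := by
    conv_lhs => rw [hvx]
    rw [conj_dot hsq]
    have key : sq * (isqrt Rα * (Qα * Qαᴴ) * isqrt Rα) * sq = Qα * Qαᴴ := by
      have h3 : sq * (isqrt Rα * (Qα * Qαᴴ) * isqrt Rα) * sq
          = (sq * isqrt Rα) * (Qα * Qαᴴ) * (isqrt Rα * sq) := by noncomm_ring
      rw [h3, mul_isqrt hRα, isqrt_mul hRα, one_mul, mul_one]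
    rw [key]
  have e3 : star v ⬝ᵥ v = star x ⬝ᵥ (Rα *ᵥ x) := by
    conv_lhs => rw [hvx]
    have h2 := conj_dot hsq 1 x
    rw [one_mulVec] at h2
    rw [h2, mul_one, psqrt_mul_self hRα]
  have e4 : t * (star v ⬝ᵥ v).re = (star x ⬝ᵥ ((Qα * Qαᴴ) *ᵥ x)).re := by
    rw [← e2, e1]
    simp [Complex.mul_re]
  set u₁ := Q₁ᴴ *ᵥ x with hu₁def
  set u₂ := Q₂ᴴ *ᵥ x with hu₂def
  have hu : Qαᴴ *ᵥ x = α • u₁ + (1 - α) • u₂ := by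
    rw [hQαdef, conjTranspose_add, conjTranspose_smul, conjTranspose_smul, star_trivial,
      star_trivial, add_mulVec, smul_mulVec, smul_mulVec]
  set U₁ : EuclideanSpace ℂ (Fin M) := WithLp.toLp 2 u₁ with hU₁def
  set U₂ : EuclideanSpace ℂ (Fin M) := WithLp.toLp 2 u₂ with hU₂def
  set Uα : EuclideanSpace ℂ (Fin M) := α • U₁ + (1 - α) • U₂ with hUαdef
  have hre1 : (star x ⬝ᵥ ((Q₁ * Q₁ᴴ) *ᵥ x)).re = ‖U₁‖ ^ 2 := by
    rw [qq_dot, star_dot_self_eq, Complex.ofReal_re]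
    exact nsq_eq_norm_sq U₁
  have hre2 : (star x ⬝ᵥ ((Q₂ * Q₂ᴴ) *ᵥ x)).re = ‖U₂‖ ^ 2 := by
    rw [qq_dot, star_dot_self_eq, Complex.ofReal_re]
    exact nsq_eq_norm_sq U₂
  have hreα : (star x ⬝ᵥ ((Qα * Qαᴴ) *ᵥ x)).re = ‖Uα‖ ^ 2 := by
    rw [qq_dot, hu, star_dot_self_eq, Complex.ofReal_re]
    exact nsq_eq_norm_sq Uα
  set a := (star x ⬝ᵥ (R₁ *ᵥ x)).re with hadef
  set b := (star x ⬝ᵥ (R₂ *ᵥ x)).re with hbdef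
  have ha : 0 ≤ a := (Complex.nonneg_iff.mp (hR₁.posSemidef.dotProduct_mulVec_nonneg x)).1
  have hb : 0 ≤ b := (Complex.nonneg_iff.mp (hR₂.posSemidef.dotProduct_mulVec_nonneg x)).1
  have key₁ : ‖U₁‖ ^ 2 ≤ f₁ * a := by
    have h := rayleigh_transfer hR₁ Q₁ x
    rwa [hre1] at h
  have key₂ : ‖U₂‖ ^ 2 ≤ f₂ * b := by
    have h := rayleigh_transfer hR₂ Q₂ x
    rwa [hre2] at h
  have hn_eq : (star v ⬝ᵥ v).re = α * a + (1 - α) * b := by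
    rw [e3, hRαdef, add_mulVec, smul_mulVec, smul_mulVec, dotProduct_add,
      dotProduct_smul, dotProduct_smul]
    simp [Complex.add_re, Complex.real_smul, Complex.mul_re, hadef, hbdef]
  have htri : ‖Uα‖ ≤ α * ‖U₁‖ + (1 - α) * ‖U₂‖ := by
    calc ‖Uα‖ ≤ ‖α • U₁‖ + ‖(1 - α) • U₂‖ := norm_add_le _ _
      _ = α * ‖U₁‖ + (1 - α) * ‖U₂‖ := by
          rw [norm_smul, norm_smul, Real.norm_of_nonneg hα0,
            Real.norm_of_nonneg (by linarith : (0:ℝ) ≤ 1 - α)]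
  have hfinal : ‖Uα‖ ^ 2 ≤ (α * f₁ + (1 - α) * f₂) * (α * a + (1 - α) * b) := by
    have h1 : ‖Uα‖ ^ 2 ≤ (α * ‖U₁‖ + (1 - α) * ‖U₂‖) ^ 2 :=
      pow_le_pow_left₀ (norm_nonneg _) htri 2
    exact h1.trans (amgm (norm_nonneg _) (norm_nonneg _) hf₁0 hf₂0 ha hb key₁ key₂ hα0 hα1)
  have hmain : t * (star v ⬝ᵥ v).re ≤ (α * f₁ + (1 - α) * f₂) * (star v ⬝ᵥ v).re := by
    rw [e4, hreα, hn_eq]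
    exact hfinal
  exact le_of_mul_le_mul_right hmain hn
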